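/- Let K be an algebraically closed field, let V be a nonzero finite-dimensional K-vector space of dimension n, and let A, B : V → V be linear maps such that the rank of AB − BA is at most 1. Then A and B are simultaneously upper triangularizable: there exists a complete flag 0 = V₀ ⊂ V₁ ⊂ ⋯ ⊂ Vₙ = V of subspaces with dim Vᵢ = i such that every Vᵢ is invariant under both A and B. -/

import Mathlib

open Module Submodule

universe u

section Aux

variable {K : Type*} [Field K]

/-- The rank of a restriction of an endomorphism to an invariant subspace is at most the
rank of the map. -/
lemma my_rank_restrict_le {V : Type u} [AddCommGroup V] [Module K V]
    (f : V →ₗ[K] V) (p : Submodule K V) (h : ∀ x ∈ p, f x ∈ p) :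
    LinearMap.rank (f.restrict h) ≤ LinearMap.rank f := by
  have heq : p.subtype ∘ₗ f.restrict h = f ∘ₗ p.subtype := by
    ext x; simp [LinearMap.restrict_apply]
  have h1 : LinearMap.rank (f.restrict h) = LinearMap.rank (p.subtype ∘ₗ f.restrict h) := by
    rw [LinearMap.rank, LinearMap.rank, LinearMap.range_comp]
    exact ((LinearMap.range (f.restrict h)).equivMapOfInjective _ p.injective_subtype).rank_eq
  rw [h1, heq]
  exact LinearMap.rank_comp_le_left _ _

/-- Two endomorphisms with commutator of rank at most one have a common eigenvector
(over an algebraically closed field). -/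
lemma my_exists_common_eigenvector [IsAlgClosed K] :
    ∀ n : ℕ, ∀ (V : Type u) [AddCommGroup V] [Module K V] [FiniteDimensional K V],
      Module.finrank K V = n → n ≠ 0 → ∀ A B : V →ₗ[K] V,
      LinearMap.rank (A ∘ₗ B - B ∘ₗ A) ≤ 1 →
      ∃ v : V, v ≠ 0 ∧ (∃ μ : K, A v = μ • v) ∧ (∃ ν : K, B v = ν • v) := by
  intro n
  induction n using Nat.strong_induction_on with
  | _ n ih =>
  intro V _ _ _ hn hn0 A B hrank
  have : Nontrivial V := by
    apply Module.nontrivial_of_finrank_pos (R := K)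
    omega
  set C : V →ₗ[K] V := A ∘ₗ B - B ∘ₗ A with hC
  obtain ⟨μ, hμ⟩ := Module.End.exists_eigenvalue (A : Module.End K V)
  set E := Module.End.eigenspace (A : Module.End K V) μ with hE
  by_cases hcase : ∀ x ∈ E, C x = 0
  · -- commutator vanishes on the eigenspace: it is B-invariant
    have hBE : ∀ x ∈ E, B x ∈ E := by
      intro x hx
      have hx' : A x = μ • x := Module.End.mem_eigenspace_iff.mp hx
      have h0 : C x = 0 := hcase x hx
      have : A (B x) - B (A x) = 0 := by simpa [hC] using h0
      have : A (B x) = μ • B x := by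
        rw [sub_eq_zero] at this
        rw [this, hx', map_smul]
      exact Module.End.mem_eigenspace_iff.mpr this
    have hEnt : Nontrivial E := (Submodule.nontrivial_iff_ne_bot).mpr hμ
    obtain ⟨ν, hν⟩ := Module.End.exists_eigenvalue (B.restrict hBE : Module.End K E)
    obtain ⟨w, hw⟩ := hν.exists_hasEigenvector
    refine ⟨(w : V), ?_, ⟨μ, Module.End.mem_eigenspace_iff.mp w.2⟩, ⟨ν, ?_⟩⟩
    · simpa using hw.right
    · have := hw.apply_eq_smul
      calc B (w : V) = ((B.restrict hBE) w : V) := rfl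
        _ = ((ν • w : E) : V) := by rw [this]
        _ = ν • (w : V) := rfl
  · push_neg at hcase
    obtain ⟨x₀, hx₀E, hx₀⟩ := hcase
    set D : V →ₗ[K] V := A - μ • LinearMap.id with hD
    have hDx : ∀ x, D x = A x - μ • x := fun x => rfl
    set U := LinearMap.range D with hU
    have hx₀A : A x₀ = μ • x₀ := Module.End.mem_eigenspace_iff.mp hx₀E
    -- the image of C is contained in U
    have hCx₀U : C x₀ ∈ U := by
      refine ⟨B x₀, ?_⟩
      rw [hDx]
      show A (B x₀) - μ • B x₀ = C x₀
      have : C x₀ = A (B x₀) - B (A x₀) := rfl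
      rw [this, hx₀A, map_smul]
    obtain ⟨v₀, hv₀⟩ := rank_le_one_iff.mp hrank
    obtain ⟨r₀, hr₀⟩ := hv₀ ⟨C x₀, by exact ⟨x₀, rfl⟩⟩
    have hr₀V : r₀ • (v₀ : V) = C x₀ := congrArg Subtype.val hr₀
    have hr₀ne : r₀ ≠ 0 := by
      rintro rfl
      exact hx₀ (by simpa using hr₀V.symm)
    have hv₀U : (v₀ : V) ∈ U := by
      have : (v₀ : V) = r₀⁻¹ • C x₀ := by
        rw [← hr₀V, smul_smul, inv_mul_cancel₀ hr₀ne, one_smul]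
      rw [this]
      exact U.smul_mem _ hCx₀U
    have hCU : ∀ x, C x ∈ U := by
      intro x
      obtain ⟨r, hr⟩ := hv₀ ⟨C x, ⟨x, rfl⟩⟩
      have : r • (v₀ : V) = C x := congrArg Subtype.val hr
      rw [← this]
      exact U.smul_mem _ hv₀U
    -- U is invariant under A and B
    have hUA : ∀ y ∈ U, A y ∈ U := by
      rintro y ⟨x, rfl⟩
      refine ⟨A x, ?_⟩
      rw [hDx, hDx, map_sub, map_smul]
    have hUB : ∀ y ∈ U, B y ∈ U := by
      rintro y ⟨x, rfl⟩
      have hkey : B (D x) = D (B x) - C x := by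
        rw [hDx, hDx]
        have : C x = A (B x) - B (A x) := rfl
        rw [map_sub, map_smul, this]
        abel
      rw [hkey]
      exact U.sub_mem ⟨B x, rfl⟩ (hCU x)
    -- U is a nonzero proper subspace
    have hDne : D ≠ 0 := by
      intro h0
      apply hx₀
      have hA' : ∀ x, A x = μ • x := by
        intro x
        have h1 : D x = 0 := by rw [h0]; rfl
        rw [hDx] at h1
        simpa using sub_eq_zero.mp h1
      show C x₀ = 0
      have hCe : C x₀ = A (B x₀) - B (A x₀) := rfl
      rw [hCe, hA' (B x₀), hA' x₀, map_smul, sub_self]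
    have hUne : U ≠ ⊥ := by
      intro h0
      apply hDne
      ext x
      have : D x ∈ U := ⟨x, rfl⟩
      rw [h0] at this
      simpa using this
    have hker : x₀ ∈ LinearMap.ker D := by
      rw [LinearMap.mem_ker, hDx, hx₀A, sub_self]
    have hx₀ne : x₀ ≠ 0 := by
      rintro rfl
      exact hx₀ (map_zero C)
    have hkerne : LinearMap.ker D ≠ ⊥ := by
      intro h0
      rw [h0] at hker
      exact hx₀ne (by simpa using hker)
    have hrankU : finrank K U < n := by
      have h1 := LinearMap.finrank_range_add_finrank_ker D
      rw [hn] at h1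
      rw [hU]
      have h2 : 0 < finrank K (LinearMap.ker D) :=
        Module.finrank_pos_iff.mpr (Submodule.nontrivial_iff_ne_bot.mpr hkerne)
      omega
    have hrankUne : finrank K U ≠ 0 := by
      intro h0
      exact hUne (Submodule.finrank_eq_zero.mp h0)
    -- restrict to U and apply the inductive hypothesis
    have hrestr : (A.restrict hUA) ∘ₗ (B.restrict hUB) - (B.restrict hUB) ∘ₗ (A.restrict hUA)
        = C.restrict (fun x hx => hCU x) := by
      ext x
      simp [hC, LinearMap.restrict_apply]
    have hrank' : LinearMap.rank ((A.restrict hUA) ∘ₗ (B.restrict hUB)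
        - (B.restrict hUB) ∘ₗ (A.restrict hUA)) ≤ 1 := by
      rw [hrestr]
      exact le_trans (my_rank_restrict_le C U _) hrank
    obtain ⟨w, hw0, ⟨μ', hμ'⟩, ⟨ν', hν'⟩⟩ :=
      ih (finrank K U) hrankU U rfl hrankUne (A.restrict hUA) (B.restrict hUB) hrank'
    refine ⟨(w : V), by simpa using hw0, ⟨μ', ?_⟩, ⟨ν', ?_⟩⟩
    · calc A (w : V) = ((A.restrict hUA) w : V) := rfl
        _ = ((μ' • w : U) : V) := by rw [hμ']
        _ = μ' • (w : V) := rfl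
    · calc B (w : V) = ((B.restrict hUB) w : V) := rfl
        _ = ((ν' • w : U) : V) := by rw [hν']
        _ = ν' • (w : V) := rfl

end Aux

/-- Finrank of a comap under the quotient map. -/
lemma my_finrank_comap_mkQ {K : Type*} [Field K] {V : Type u} [AddCommGroup V] [Module K V]
    [FiniteDimensional K V] (L : Submodule K V) (p : Submodule K (V ⧸ L)) :
    finrank K (p.comap L.mkQ) = finrank K p + finrank K L := by
  set q := p.comap L.mkQ with hq
  set f : q →ₗ[K] V ⧸ L := L.mkQ ∘ₗ q.subtype with hf
  have hLq : L ≤ q := by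
    intro x hx
    show L.mkQ x ∈ p
    have : L.mkQ x = 0 := by
      rw [Submodule.mkQ_apply, Submodule.Quotient.mk_eq_zero]
      exact hx
    rw [this]; exact p.zero_mem
  have hrange : LinearMap.range f = p := by
    rw [hf, LinearMap.range_comp, Submodule.range_subtype, hq, Submodule.map_comap_eq,
      Submodule.range_mkQ, top_inf_eq]
  have hker : LinearMap.ker f = L.comap q.subtype := by
    rw [hf, LinearMap.ker_comp, Submodule.ker_mkQ]
  have h1 := LinearMap.finrank_range_add_finrank_ker f
  rw [hrange, hker] at h1
  have h2 : finrank K (L.comap q.subtype) = finrank K L :=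
    (Submodule.comapSubtypeEquivOfLe hLq).finrank_eq
  rw [h2] at h1
  have h3 : finrank K q = finrank K p + finrank K L := h1.symm
  exact h3

/-- The inductive construction of the invariant flag. -/
lemma my_flag_aux {K : Type*} [Field K] [IsAlgClosed K] :
    ∀ n : ℕ, ∀ (V : Type u) [AddCommGroup V] [Module K V] [FiniteDimensional K V],
      Module.finrank K V = n → ∀ A B : V →ₗ[K] V,
      LinearMap.rank (A ∘ₗ B - B ∘ₗ A) ≤ 1 →
      ∃ W : Fin (n + 1) → Submodule K V,
        Monotone W ∧ W 0 = ⊥ ∧ W (Fin.last n) = ⊤ ∧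
        (∀ i : Fin (n + 1), Module.finrank K (W i) = (i : ℕ)) ∧
        (∀ i : Fin (n + 1), ∀ x ∈ W i, A x ∈ W i ∧ B x ∈ W i) := by
  intro n
  induction n with
  | zero =>
    intro V _ _ _ hn A B _
    have hsub : Subsingleton V := Module.finrank_zero_iff.mp hn
    have hbt : (⊥ : Submodule K V) = ⊤ := Subsingleton.elim _ _
    refine ⟨fun _ => ⊥, monotone_const, rfl, hbt, ?_, ?_⟩
    · intro i
      have hi : (i : ℕ) = 0 := by omega
      rw [hi]
      simp
    · intro i x hx
      have : x = 0 := by simpa using hx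
      subst this
      simp
  | succ n ihn =>
    intro V _ _ _ hn A B hrank
    have hne : Module.finrank K V ≠ 0 := by omega
    obtain ⟨v, hv0, ⟨μ, hμ⟩, ⟨ν, hν⟩⟩ :=
      my_exists_common_eigenvector (K := K) (Module.finrank K V) V rfl hne A B hrank
    set L : Submodule K V := Submodule.span K {v} with hL
    have hL1 : finrank K L = 1 := finrank_span_singleton hv0
    have hAL : L ≤ L.comap A := by
      rw [hL, Submodule.span_le]
      intro x hx
      rw [Set.mem_singleton_iff] at hx
      rw [hx]
      show A v ∈ L
      rw [hμ]
      exact L.smul_mem μ (Submodule.mem_span_singleton_self v)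
    have hBL : L ≤ L.comap B := by
      rw [hL, Submodule.span_le]
      intro x hx
      rw [Set.mem_singleton_iff] at hx
      rw [hx]
      show B v ∈ L
      rw [hν]
      exact L.smul_mem ν (Submodule.mem_span_singleton_self v)
    set A' := Submodule.mapQ L L A hAL with hA'
    set B' := Submodule.mapQ L L B hBL with hB'
    have hcomm : (A' ∘ₗ B' - B' ∘ₗ A') ∘ₗ L.mkQ = L.mkQ ∘ₗ (A ∘ₗ B - B ∘ₗ A) := by
      ext x
      simp [hA', hB', Submodule.mapQ_apply]
    have hrank' : LinearMap.rank (A' ∘ₗ B' - B' ∘ₗ A') ≤ 1 := by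
      have h1 : LinearMap.rank (A' ∘ₗ B' - B' ∘ₗ A')
          = LinearMap.rank ((A' ∘ₗ B' - B' ∘ₗ A') ∘ₗ L.mkQ) := by
        rw [LinearMap.rank, LinearMap.rank,
          LinearMap.range_comp_of_range_eq_top _ (Submodule.range_mkQ L)]
      rw [h1, hcomm]
      exact le_trans (LinearMap.rank_comp_le_right _ _) hrank
    have hquot : finrank K (V ⧸ L) = n := by
      have := Submodule.finrank_quotient_add_finrank L
      omega
    obtain ⟨W', hmono, hW0, hWlast, hdim, hinv⟩ := ihn (V ⧸ L) hquot A' B' hrank'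
    refine ⟨fun i => Fin.cases ⊥ (fun j => (W' j).comap L.mkQ) i, ?_, ?_, ?_, ?_, ?_⟩
    · -- Monotone
      intro i j hij
      induction i using Fin.cases with
      | zero => simp
      | succ i =>
        induction j using Fin.cases with
        | zero => exact absurd hij (by simp [Fin.lt_iff_val_lt_val, Fin.le_iff_val_le_val])
        | succ j =>
          simp only [Fin.cases_succ]
          exact Submodule.comap_mono (hmono (by
            rwa [Fin.succ_le_succ_iff] at hij))
    · simp
    · have hlast : (Fin.last (n + 1)) = (Fin.last n).succ := (Fin.succ_last n).symm
      rw [hlast]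
      simp only [Fin.cases_succ]
      rw [hWlast, Submodule.comap_top]
    · intro i
      induction i using Fin.cases with
      | zero => exact finrank_bot K V
      | succ j =>
        show finrank K (Submodule.comap L.mkQ (W' j)) = _
        rw [my_finrank_comap_mkQ, hdim j, hL1, Fin.val_succ]
    · intro i x hx
      induction i using Fin.cases with
      | zero =>
        have : x = 0 := by simpa using hx
        subst this
        simp
      | succ j =>
        simp only [Fin.cases_succ] at hx ⊢
        rw [Submodule.mem_comap] at hx
        have hAx : L.mkQ (A x) = A' (L.mkQ x) := by
          simp [hA', Submodule.mapQ_apply]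
        have hBx : L.mkQ (B x) = B' (L.mkQ x) := by
          simp [hB', Submodule.mapQ_apply]
        exact ⟨Submodule.mem_comap.mpr (hAx ▸ (hinv j _ hx).1),
          Submodule.mem_comap.mpr (hBx ▸ (hinv j _ hx).2)⟩


/-- Two endomorphisms of a nonzero finite-dimensional vector space over an
algebraically closed field whose commutator has rank at most 1 are simultaneously
upper triangularizable: there is a complete invariant flag. -/
theorem simultaneously_triangularizable_of_commutator_rank_le_one
    (K : Type*) [Field K] [IsAlgClosed K]
    (V : Type*) [AddCommGroup V] [Module K V] [FiniteDimensional K V]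
    (n : ℕ) (hn : Module.finrank K V = n) (hn0 : n ≠ 0)
    (A B : V →ₗ[K] V)
    (hrank : LinearMap.rank (A ∘ₗ B - B ∘ₗ A) ≤ 1) :
    ∃ W : Fin (n + 1) → Submodule K V,
      Monotone W ∧ W 0 = ⊥ ∧ W (Fin.last n) = ⊤ ∧
      (∀ i : Fin (n + 1), Module.finrank K (W i) = (i : ℕ)) ∧
      (∀ i : Fin (n + 1), ∀ x ∈ W i, A x ∈ W i ∧ B x ∈ W i) := by
  subst hn
  exact my_flag_aux (Module.finrank K V) V rfl A B hrank
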